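/- Under the hypotheses of the weighted parity-check capacity corollary — Y finite, (S,X,Y) with X binary, p_d(y) = P(X=1|Y=y), Q ∼ P_Q with E[H_b(Q)] = (1 - H(X|S))/(1-R), V|Q ∼ Bern(Q), and rate R < H(X|S) - H(X|Y) — for any conditional distributions P_{X̃|Y} (binary given Y) and P_{Ṽ|Q} (binary given Q) satisfying H(X̃|Y) + (1-R) H(Ṽ|Q) ≥ 1 - R, the strict inequality E[H_b(X̃, p_d(Y))] + (1-R) E[H_b(Ṽ, Q)] > E[H_b(X, p_d(Y))] + (1-R) E[H_b(V, Q)] holds. -/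

import Mathlib

/-- Binary cross entropy `H_b(φ,ψ) = -φ log₂ ψ - (1-φ) log₂ (1-ψ)`. -/
noncomputable def Hb2 (φ ψ : ℝ) : ℝ :=
  -φ * Real.logb 2 ψ - (1 - φ) * Real.logb 2 (1 - ψ)

/-- Binary entropy `H_b(φ) = H_b(φ,φ)`. -/
noncomputable def Hb (φ : ℝ) : ℝ := Hb2 φ φ

lemma Hb_le_Hb2 (φ ψ : ℝ) (hφ : φ ∈ Set.Icc (0:ℝ) 1) (hψ : ψ ∈ Set.Ioo (0:ℝ) 1) :
    Hb φ ≤ Hb2 φ ψ := by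
  obtain ⟨hφ0, hφ1⟩ := hφ
  obtain ⟨hψ0, hψ1⟩ := hψ
  have hlog2 : (0:ℝ) < Real.log 2 := Real.log_pos (by norm_num)
  unfold Hb Hb2
  rw [show (-φ * Real.logb 2 φ - (1 - φ) * Real.logb 2 (1 - φ) ≤
      -φ * Real.logb 2 ψ - (1 - φ) * Real.logb 2 (1 - ψ)) ↔
      (φ * Real.logb 2 ψ + (1 - φ) * Real.logb 2 (1 - ψ) ≤
       φ * Real.logb 2 φ + (1 - φ) * Real.logb 2 (1 - φ)) from by constructor <;> intro h <;> linarith]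
  -- key: for a ∈ [0,1] handled per case
  have key : ∀ a b : ℝ, 0 ≤ a → 0 < b → a * Real.logb 2 b - a * Real.logb 2 a ≤ (b - a) / Real.log 2 := by
    intro a b ha hb
    rcases eq_or_lt_of_le ha with h | h
    · simp [← h]
      positivity
    · have : Real.logb 2 b - Real.logb 2 a = Real.log (b / a) / Real.log 2 := by
        rw [Real.log_div (ne_of_gt hb) (ne_of_gt h)]
        simp [Real.logb, sub_div]
      have hle : Real.log (b / a) ≤ b / a - 1 :=
        Real.log_le_sub_one_of_pos (by positivity)
      have : a * (Real.logb 2 b - Real.logb 2 a) ≤ a * ((b/a - 1) / Real.log 2) := by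
        rw [this]
        apply mul_le_mul_of_nonneg_left _ ha
        exact div_le_div_of_nonneg_right hle hlog2.le
      calc a * Real.logb 2 b - a * Real.logb 2 a = a * (Real.logb 2 b - Real.logb 2 a) := by ring
        _ ≤ a * ((b/a - 1) / Real.log 2) := this
        _ = (b - a) / Real.log 2 := by field_simp
  have h1 := key φ ψ hφ0 hψ0
  have h2 := key (1 - φ) (1 - ψ) (by linarith) (by linarith)
  have hsum : (ψ - φ) / Real.log 2 + (1 - ψ - (1 - φ)) / Real.log 2 = 0 := by
    field_simp; ring
  linarith


/-- Under the hypotheses of the weighted parity-check capacity corollary —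
`Y` finite, `X` binary with conditional entropies `H(X|S)`, `H(X|Y)`,
decoder bias `p_d(y) = P(X=1|Y=y)`, parity bias `Q` with
`E[H_b(Q)] = (1 - H(X|S))/(1-R)` and `V|Q ∼ Bern(Q)` (so `H(V|Q) = E[H_b(V,Q)] = E[H_b(Q)]`),
and rate `R < H(X|S) - H(X|Y)` — any conditional distributions `P(X̃=1|Y=y) = pt y` and
`P(Ṽ=1|Q=q ω) = vt ω` satisfying `H(X̃|Y) + (1-R) H(Ṽ|Q) ≥ 1 - R` obey the strict
inequality
`E[H_b(X̃,p_d(Y))] + (1-R) E[H_b(Ṽ,Q)] > E[H_b(X,p_d(Y))] + (1-R) E[H_b(V,Q)]`. -/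
theorem decoder_strict_inequality
    (Y : Type*) [Fintype Y] (R : ℝ) (hR0 : 0 ≤ R) (hR1 : R < 1)
    -- marginal of Y and decoder conditional probability pd y = P(X=1|Y=y)
    (pY : Y → ℝ) (hpY : ∀ y, 0 ≤ pY y) (hpY1 : ∑ y, pY y = 1)
    (pd : Y → ℝ) (hpd : ∀ y, pd y ∈ Set.Ioo (0 : ℝ) 1)
    -- conditional entropies H(X|Y) and H(X|S)
    (HXY HXS : ℝ) (hHXY : HXY = ∑ y, pY y * Hb (pd y))
    -- parity bias distribution Q with values q ω ∈ (0,1) and weights w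
    (Ω : Type*) [Fintype Ω] (w : Ω → ℝ) (hw : ∀ ω, 0 ≤ w ω) (hw1 : ∑ ω, w ω = 1)
    (q : Ω → ℝ) (hq : ∀ ω, q ω ∈ Set.Ioo (0 : ℝ) 1)
    -- E[H_b(Q)] = (1 - H(X|S))/(1 - R)
    (hEQ : ∑ ω, w ω * Hb (q ω) = (1 - HXS) / (1 - R))
    -- rate condition R < H(X|S) - H(X|Y) = I(X;Y) - I(X;S)
    (hrate : R < HXS - HXY)
    -- alternative conditional distributions P(X̃=1|Y=y) = pt y, P(Ṽ=1|Q=q ω) = vt ω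
    (pt : Y → ℝ) (hpt : ∀ y, pt y ∈ Set.Icc (0 : ℝ) 1)
    (vt : Ω → ℝ) (hvt : ∀ ω, vt ω ∈ Set.Icc (0 : ℝ) 1)
    -- the constraint H(X̃|Y) + (1-R) H(Ṽ|Q) ≥ 1 - R
    (hcons : 1 - R ≤ ∑ y, pY y * Hb (pt y) + (1 - R) * ∑ ω, w ω * Hb (vt ω)) :
    ∑ y, pY y * Hb2 (pd y) (pd y) + (1 - R) * ∑ ω, w ω * Hb2 (q ω) (q ω)
      < ∑ y, pY y * Hb2 (pt y) (pd y) + (1 - R) * ∑ ω, w ω * Hb2 (vt ω) (q ω) := by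
  have hR : (0:ℝ) < 1 - R := by linarith
  have hL1 : ∑ y, pY y * Hb2 (pd y) (pd y) = HXY := by
    rw [hHXY]; rfl
  have hL2 : ∑ ω, w ω * Hb2 (q ω) (q ω) = (1 - HXS) / (1 - R) := by
    rw [← hEQ]; rfl
  have hlhs : ∑ y, pY y * Hb2 (pd y) (pd y) + (1 - R) * ∑ ω, w ω * Hb2 (q ω) (q ω)
      = HXY + (1 - HXS) := by
    rw [hL1, hL2]; field_simp
  have h1 : ∑ y, pY y * Hb (pt y) ≤ ∑ y, pY y * Hb2 (pt y) (pd y) :=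
    Finset.sum_le_sum fun y _ =>
      mul_le_mul_of_nonneg_left (Hb_le_Hb2 _ _ (hpt y) (hpd y)) (hpY y)
  have h2 : ∑ ω, w ω * Hb (vt ω) ≤ ∑ ω, w ω * Hb2 (vt ω) (q ω) :=
    Finset.sum_le_sum fun ω _ =>
      mul_le_mul_of_nonneg_left (Hb_le_Hb2 _ _ (hvt ω) (hq ω)) (hw ω)
  have h2' := mul_le_mul_of_nonneg_left h2 hR.le
  rw [hlhs]
  linarith
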